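/- arXiv:2502.20496 — 3 statements merged into one kernel-verified Lean document; each statement's English description precedes it below -/
import Mathlib

section
/- (Fracture) Every type X is equivalent to the pullback of its closed-modal unit ●η○ : ●X → ●○X against the closed unit η● : ○X → ●○X; that is, X ≃ Σ (p : ●X × ○X), (●η○)(p.1) = η●(p.2). -/
/-- The closed modality: quotient of X ⊕ φ identifying `inl x` with `inr b`. -/
def Closed (φ : Prop) (X : Type) : Type :=
  Quot (fun a b : Sum X (PLift φ) => ∃ (x : X) (p : φ), a = Sum.inl x ∧ b = Sum.inr ⟨p⟩)

/-- The closed-modality unit. -/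
def etaClosed (φ : Prop) (X : Type) : X → Closed φ X :=
  fun x => Quot.mk _ (Sum.inl x)

/-- Functorial action of the closed modality on maps. -/
def closedMap (φ : Prop) {X Y : Type} (f : X → Y) : Closed φ X → Closed φ Y :=
  Quot.lift (fun s => Quot.mk _ (s.map f id))
    (by rintro a b ⟨x, p, rfl, rfl⟩; exact Quot.sound ⟨f x, p, rfl, rfl⟩)

/-- If `¬φ`, the unit `etaClosed` is injective. -/
lemma etaClosed_inj {φ : Prop} (h : ¬φ) {X : Type} {x y : X}
    (e : etaClosed φ X x = etaClosed φ X y) : x = y := by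
  have := congrArg (Quot.lift (fun s : Sum X (PLift φ) => s.elim id (fun p => (h p.down).elim))
    (by rintro a b ⟨z, p, rfl, rfl⟩; exact (h p).elim)) e
  exact this

/-- If `φ` holds, `Closed φ X` is a singleton. -/
lemma closed_eq {φ : Prop} (p : φ) {X : Type} (a : Closed φ X) :
    a = Quot.mk _ (Sum.inr ⟨p⟩) := by
  induction a using Quot.ind with
  | _ s =>
    rcases s with x | q
    · exact Quot.sound ⟨x, p, rfl, rfl⟩
    · rfl

/-- (Fracture) Every type X is equivalent to the pullback of `●η○ : ●X → ●○X`
against `η● : ○X → ●○X`. -/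
theorem fracture (φ : Prop) (X : Type) :
    Nonempty (X ≃
      {p : Closed φ X × (φ → X) //
        closedMap φ (fun x => (fun _ => x : φ → X)) p.1 = etaClosed φ (φ → X) p.2}) := by
  refine ⟨Equiv.ofBijective (fun x => ⟨(etaClosed φ X x, fun _ => x), rfl⟩) ⟨?_, ?_⟩⟩
  · intro x y e
    by_cases h : φ
    · have := congrArg (fun q => q.1.2 h) e
      exact this
    · exact etaClosed_inj h (congrArg (fun q => q.1.1) e)
  · rintro ⟨⟨c, g⟩, hc⟩
    by_cases h : φ
    · refine ⟨g h, ?_⟩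
      apply Subtype.ext
      refine Prod.ext ?_ ?_
      · exact ((closed_eq h _).trans (closed_eq h _).symm : etaClosed φ X (g h) = c)
      · funext q; exact congrArg g rfl
    · induction c using Quot.ind with
      | _ s =>
        rcases s with x | q
        · refine ⟨x, ?_⟩
          apply Subtype.ext
          refine Prod.ext rfl ?_
          exact etaClosed_inj h hc
        · exact (h q.down).elim
end

section
/- Any function from a concrete type to an abstract type is constant on the component determined by φ: if X is concrete and Z is abstract (the unit Z → (φ → Z) is an equivalence), then any f : X → Z is a constant function. -/
/-- Any function from a concrete type to an abstract type is constant. -/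
theorem concrete_to_abstract_constant (φ : Prop) (X Z : Type)
    (hX : φ → (Nonempty X ∧ ∀ x y : X, x = y))
    (hZ : Function.Bijective (fun (z : Z) => (fun (_ : φ) => z : φ → Z)))
    (f : X → Z) : ∀ x x' : X, f x = f x' := by
  intro x x'
  apply hZ.injective
  funext h
  simp only
  rw [(hX h).2 x x']
end

section
/- The sealing construction is a monad: defining T X := Σ ((c, b) : ●X × ○X), (●η○) c ≤ η● b over a preordered setting where the order on ●○X is induced pointwise, the unit η x := (η● x, η○ x) and the multiplication given by the modal functorial actions of the projections satisfy the monad laws (left unit, right unit, associativity). -/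
variable {C A : Type} [Preorder A]

/-- Concrete component of the sealing monad T at a phased type (C, A, α):
pairs of an implementation and an upper-bounding specification. -/
def TCon (α : C → A) : Type := {p : C × A // α p.1 ≤ p.2}

/-- Abstraction function of T (C, A, α): project the specification. -/
def Tabs (α : C → A) : TCon α → A := fun p => p.val.2

/-- Unit of the sealing monad. -/
def Tunit (α : C → A) : C → TCon α := fun c => ⟨(c, α c), le_refl _⟩

/-- Multiplication of the sealing monad (uses transitivity of ≤). -/
def Tmul (α : C → A) : TCon (Tabs α) → TCon α :=
  fun q => ⟨(q.val.1.val.1, q.val.2), le_trans q.val.1.prop q.prop⟩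

/-- Functorial action of T on a morphism whose abstract component is the
identity, given a commuting square. -/
def Tmap {C' : Type} {α : C → A} {α' : C' → A} (f : C → C')
    (h : ∀ c, α' (f c) = α c) : TCon α → TCon α' :=
  fun p => ⟨(f p.val.1, p.val.2), by rw [h]; exact p.prop⟩

/-- The sealing construction is a monad: left unit, right unit, and
associativity laws hold. -/
theorem sealing_monad_laws (α : C → A) :
    (∀ p : TCon α, Tmul α (Tunit (Tabs α) p) = p) ∧
    (∀ p : TCon α, Tmul α (Tmap (Tunit α) (fun _ => rfl) p) = p) ∧
    (∀ q : TCon (Tabs (Tabs α)),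
      Tmul α (Tmul (Tabs α) q) = Tmul α (Tmap (Tmul α) (fun _ => rfl) q)) := by
  refine ⟨fun p => rfl, fun p => rfl, fun q => rfl⟩
end
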